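/- Leibniz rule for the q^{-1}-derivative: for two homogeneous polynomials f(x,y;m) of degree r and g(x,y;m) of degree s (with coefficients depending on the parameter m), and for every ν ≥ 0, the ν-th q^{-1}-derivative with respect to y of their q-product satisfies [f(x,y;m) * g(x,y;m)]^{{ν}} = Σ_{l=0}^{ν} [ν choose l]_q q^{l(s-ν+l)} f^{{l}}(x,y;m) * g^{{ν-l}}(x,y;m-l). -/

import Mathlib

noncomputable section

/-- `alphaQ q a u = ∏_{i=0}^{u-1} (q^a - q^i)`, with integer exponent `a`. -/
def alphaQ (q : ℚ) (a : ℤ) (u : ℕ) : ℚ :=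
  ∏ i ∈ Finset.range u, (q ^ a - q ^ (i : ℤ))

/-- The Gaussian binomial `[a choose b]_q = α(a,b)/α(b,b)`. -/
def gaussQ (q : ℚ) (a b : ℕ) : ℚ := alphaQ q a b / alphaQ q b b

/-- `sig l = l(l-1)/2`. -/
def sig (l : ℕ) : ℕ := l * (l - 1) / 2

/-- A homogeneous polynomial in `x, y` of degree `deg`, whose coefficients depend on an
integer parameter `m`: `coeff m i` is the coefficient of `y^i x^(deg - i)` (coefficients
with `i > deg` are regarded as zero). -/
structure QPoly where
  deg : ℕ
  coeff : ℤ → ℕ → ℚ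

/-- The q-product `a * b`: a homogeneous polynomial of degree `r + s` whose coefficient of
`y^u x^(r+s-u)` is `∑_{i=0}^u q^(i·s) aᵢ(m) b_{u-i}(m-i)`, where `s` is the degree of `b`. -/
def qMul (q : ℚ) (a b : QPoly) : QPoly :=
  ⟨a.deg + b.deg, fun m u =>
    ∑ i ∈ Finset.range (u + 1), q ^ (i * b.deg) * a.coeff m i * b.coeff (m - i) (u - i)⟩

/-- The constant polynomial `1`. -/
def qOne : QPoly := ⟨0, fun _ u => if u = 0 then 1 else 0⟩

/-- The `l`-th q-power: `a^[0] = 1` and `a^[l] = a^[l-1] * a`. -/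
def qPow (q : ℚ) (a : QPoly) : ℕ → QPoly
  | 0 => qOne
  | l + 1 => qMul q (qPow q a l) a

/-- Evaluation of a homogeneous polynomial at `(x, y)`, with parameter `m`. -/
def QPoly.eval (a : QPoly) (m : ℤ) (x y : ℚ) : ℚ :=
  ∑ u ∈ Finset.range (a.deg + 1), a.coeff m u * y ^ u * x ^ (a.deg - u)

/-- The homogeneous polynomial `x + (q^m - 1) y` of degree 1. -/
def polyXA (q : ℚ) : QPoly :=
  ⟨1, fun m u => if u = 0 then 1 else if u = 1 then q ^ m - 1 else 0⟩

/-- The homogeneous polynomial `x - y` of degree 1. -/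
def polyXB : QPoly :=
  ⟨1, fun _ u => if u = 0 then 1 else if u = 1 then -1 else 0⟩

/-- The q⁻¹-derivative with respect to `y` of a homogeneous polynomial of degree `s`,
expressed coefficientwise: the term `g_j y^j x^(s-j)` is sent to
`g_j (q⁻¹^j - 1)/(q⁻¹ - 1) · y^(j-1) x^(s-j)`. -/
def qInvDerivP (q : ℚ) (a : QPoly) : QPoly :=
  ⟨a.deg - 1, fun m j => ((q⁻¹) ^ (j + 1) - 1) / (q⁻¹ - 1) * a.coeff m (j + 1)⟩

/-- Substitution `m ↦ m - t` in the integer parameter of a homogeneous polynomial. -/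
def mShift (a : QPoly) (t : ℤ) : QPoly := ⟨a.deg, fun m i => a.coeff (m - t) i⟩

namespace LeibnizAux

/-- abbreviation for the q⁻¹-number factor in the derivative -/
def cq (q : ℚ) (k : ℕ) : ℚ := ((q⁻¹) ^ k - 1) / (q⁻¹ - 1)

variable {q : ℚ}

lemma cq_zero : cq q 0 = 0 := by simp [cq]

lemma deriv_coeff (a : QPoly) (m : ℤ) (j : ℕ) :
    (qInvDerivP q a).coeff m j = cq q (j + 1) * a.coeff m (j + 1) := rfl

lemma iter_deg (a : QPoly) (k : ℕ) : ((qInvDerivP q)^[k] a).deg = a.deg - k := by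
  induction k with
  | zero => simp
  | succ k ih =>
    rw [Function.iterate_succ_apply']
    show ((qInvDerivP q)^[k] a).deg - 1 = _
    omega

lemma iter_vanish (g : QPoly) (hg : ∀ m i, g.deg < i → g.coeff m i = 0) :
    ∀ (k : ℕ) (m : ℤ) (j : ℕ), g.deg < j + k → ((qInvDerivP q)^[k] g).coeff m j = 0 := by
  intro k
  induction k with
  | zero => intro m j h; exact hg m j (by simpa using h)
  | succ k ih =>
    intro m j h
    rw [Function.iterate_succ_apply', deriv_coeff, ih m (j + 1) (by omega), mul_zero]

lemma mShift_deriv (b : QPoly) (t : ℤ) :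
    qInvDerivP q (mShift b t) = mShift (qInvDerivP q b) t := rfl

lemma mShift_mShift (b : QPoly) (s t : ℤ) :
    mShift (mShift b s) t = mShift b (s + t) := by
  unfold mShift
  congr 1
  funext m i
  have : m - (s + t) = m - t - s := by ring
  rw [this]

lemma cq_split (hq1 : q ≠ 1) {i n : ℕ} (h : i ≤ n) :
    cq q n = cq q i + (q⁻¹) ^ i * cq q (n - i) := by
  have hinv : q⁻¹ ≠ 1 := by
    simpa [inv_eq_one] using hq1
  have hd : q⁻¹ - 1 ≠ 0 := sub_ne_zero.mpr hinv
  have hpow : (q⁻¹) ^ i * (q⁻¹) ^ (n - i) = (q⁻¹) ^ n := by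
    rw [← pow_add]; congr 1; omega
  unfold cq
  rw [mul_div_assoc', ← add_div]
  congr 1
  rw [mul_sub, hpow, mul_one]
  ring


lemma alphaQ_zero (a : ℤ) : alphaQ q a 0 = 1 := by simp [alphaQ]

lemma alpha_succ (hq0 : q ≠ 0) (a : ℤ) (k : ℕ) :
    alphaQ q (a + 1) (k + 1) = (q ^ (a + 1) - 1) * (q ^ (k : ℤ) * alphaQ q a k) := by
  unfold alphaQ
  rw [Finset.prod_range_succ']
  have h1 : ∀ i ∈ Finset.range k, q ^ (a + 1) - q ^ ((i : ℤ) + 1)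
      = q * (q ^ a - q ^ (i : ℤ)) := by
    intro i _
    have e1 : q ^ (a + 1) = q ^ a * q := by rw [zpow_add₀ hq0, zpow_one]
    have e2 : q ^ ((i : ℤ) + 1) = q ^ (i : ℤ) * q := by rw [zpow_add₀ hq0, zpow_one]
    rw [e1, e2]; ring
  push_cast
  rw [Finset.prod_congr rfl h1, Finset.prod_mul_distrib, Finset.prod_const,
    Finset.card_range, zpow_zero, ← zpow_natCast q k]
  ring

lemma alphaQ_diag_ne_zero (hq : 1 < q) (k : ℕ) : alphaQ q (k : ℤ) k ≠ 0 := by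
  unfold alphaQ
  apply Finset.prod_ne_zero_iff.mpr
  intro i hi
  have : q ^ (i : ℤ) < q ^ (k : ℤ) := by
    apply zpow_lt_zpow_right₀ hq
    exact_mod_cast Finset.mem_range.mp hi
  exact sub_ne_zero.mpr this.ne'

lemma gauss_zero (n : ℕ) : gaussQ q n 0 = 1 := by simp [gaussQ, alphaQ]

lemma gauss_diag_succ (n : ℕ) : gaussQ q n (n + 1) = 0 := by
  unfold gaussQ alphaQ
  rw [Finset.prod_eq_zero (Finset.self_mem_range_succ n)]
  · simp
  · simp

lemma gauss_pascal (hq : 1 < q) (n k : ℕ) :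
    gaussQ q (n + 1) (k + 1)
      = q ^ ((k : ℤ) + 1) * gaussQ q n (k + 1) + gaussQ q n k := by
  have hq0 : q ≠ 0 := by positivity
  have hak : alphaQ q (k : ℤ) k ≠ 0 := alphaQ_diag_ne_zero hq k
  have hakk : alphaQ q ((k : ℤ) + 1) (k + 1) ≠ 0 := by
    have := alphaQ_diag_ne_zero hq (k + 1)
    push_cast at this
    exact this
  have hA : alphaQ q ((k : ℤ) + 1) (k + 1)
      = (q ^ ((k : ℤ) + 1) - 1) * (q ^ (k : ℤ) * alphaQ q (k : ℤ) k) :=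
    alpha_succ hq0 _ _
  have hB : alphaQ q ((n : ℤ) + 1) (k + 1)
      = (q ^ ((n : ℤ) + 1) - 1) * (q ^ (k : ℤ) * alphaQ q (n : ℤ) k) :=
    alpha_succ hq0 _ _
  have hN : alphaQ q (n : ℤ) (k + 1) = alphaQ q (n : ℤ) k * (q ^ (n : ℤ) - q ^ (k : ℤ)) := by
    unfold alphaQ; rw [Finset.prod_range_succ]
  have hk1 : q ^ ((k : ℤ) + 1) - 1 ≠ 0 := by
    have : (1 : ℚ) < q ^ ((k : ℤ) + 1) := one_lt_zpow₀ hq (by omega)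
    exact sub_ne_zero.mpr (ne_of_gt this)
  have hpk : q ^ (k : ℤ) ≠ 0 := zpow_ne_zero _ hq0
  have ek : q ^ ((k : ℤ) + 1) = q ^ (k + 1) := by
    rw [show ((k : ℤ) + 1) = ((k + 1 : ℕ) : ℤ) by push_cast; ring, zpow_natCast]
  have en : q ^ ((n : ℤ) + 1) = q ^ (n + 1) := by
    rw [show ((n : ℤ) + 1) = ((n + 1 : ℕ) : ℤ) by push_cast; ring, zpow_natCast]
  rw [ek] at hA hk1
  rw [en] at hB
  rw [zpow_natCast] at hpk
  rw [zpow_natCast, zpow_natCast] at hN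
  unfold gaussQ
  push_cast
  rw [hA, hB, hN, ek]
  simp only [zpow_natCast]
  field_simp
  ring


lemma qMul_coeff (a b : QPoly) (m : ℤ) (u : ℕ) :
    (qMul q a b).coeff m u
      = ∑ i ∈ Finset.range (u + 1),
          q ^ (i * b.deg) * a.coeff m i * b.coeff (m - i) (u - i) := rfl

lemma step (hq0 : q ≠ 0) (hq1 : q ≠ 1) (a b : QPoly)
    (hb : ∀ m j, b.deg < j → b.coeff m j = 0) (m : ℤ) (u : ℕ) :
    cq q (u + 1) * (qMul q a b).coeff m (u + 1)
      = q ^ b.deg * (qMul q (qInvDerivP q a) (mShift b 1)).coeff m u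
        + (qMul q a (qInvDerivP q b)).coeff m u := by
  have S1 : ∑ i ∈ Finset.range (u + 2),
      cq q i * (q ^ (i * b.deg) * a.coeff m i * b.coeff (m - i) (u + 1 - i))
      = q ^ b.deg * (qMul q (qInvDerivP q a) (mShift b 1)).coeff m u := by
    rw [Finset.sum_range_succ', qMul_coeff, Finset.mul_sum]
    rw [cq_zero, zero_mul, add_zero]
    apply Finset.sum_congr rfl
    intro i _
    have e1 : u + 1 - (i + 1) = u - i := by omega
    have e2 : (m - (↑(i + 1) : ℤ)) = m - ↑i - 1 := by push_cast; ring
    have e3 : q ^ ((i + 1) * b.deg) = q ^ b.deg * q ^ (i * b.deg) := by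
      rw [← pow_add]; congr 1; ring
    have e4 : (mShift b 1).coeff (m - ↑i) (u - i) = b.coeff (m - ↑i - 1) (u - i) := rfl
    have e5 : (qInvDerivP q a).coeff m i = cq q (i + 1) * a.coeff m (i + 1) := rfl
    have e6 : (mShift b 1).deg = b.deg := rfl
    rw [e1, e2, e3, e4, e5, e6]
    ring
  have S2 : ∑ i ∈ Finset.range (u + 2),
      (q⁻¹) ^ i * cq q (u + 1 - i) * (q ^ (i * b.deg) * a.coeff m i * b.coeff (m - i) (u + 1 - i))
      = (qMul q a (qInvDerivP q b)).coeff m u := by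
    rw [Finset.sum_range_succ, qMul_coeff]
    rw [show u + 1 - (u + 1) = 0 by omega, cq_zero, mul_zero, zero_mul, add_zero]
    apply Finset.sum_congr rfl
    intro i hi
    have hiu : i < u + 1 := Finset.mem_range.mp hi
    have e1 : u + 1 - i = u - i + 1 := by omega
    have e5 : (qInvDerivP q b).coeff (m - ↑i) (u - i) = cq q (u - i + 1) * b.coeff (m - ↑i) (u - i + 1) := rfl
    have e6 : (qInvDerivP q b).deg = b.deg - 1 := rfl
    rw [e1, e5, e6]
    rcases Nat.eq_zero_or_pos b.deg with hd | hd
    · rw [hb (m - ↑i) (u - i + 1) (by omega)]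
      ring
    · obtain ⟨d, hd⟩ : ∃ d, b.deg = d + 1 := ⟨b.deg - 1, by omega⟩
      rw [hd]
      have e3 : (q⁻¹) ^ i * q ^ (i * (d + 1)) = q ^ (i * (d + 1 - 1)) := by
        rw [show i * (d + 1) = i * d + i by ring, pow_add, inv_pow]
        rw [show d + 1 - 1 = d by omega]
        field_simp
      rw [← e3]
      ring
  calc cq q (u + 1) * (qMul q a b).coeff m (u + 1)
      = ∑ i ∈ Finset.range (u + 2),
          (cq q i * (q ^ (i * b.deg) * a.coeff m i * b.coeff (m - i) (u + 1 - i))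
           + (q⁻¹) ^ i * cq q (u + 1 - i)
              * (q ^ (i * b.deg) * a.coeff m i * b.coeff (m - i) (u + 1 - i))) := by
        rw [qMul_coeff, Finset.mul_sum]
        apply Finset.sum_congr rfl
        intro i hi
        rw [cq_split hq1 (show i ≤ u + 1 by exact Nat.lt_succ_iff.mp (Finset.mem_range.mp hi))]
        ring
    _ = _ := by rw [Finset.sum_add_distrib, S1, S2]


lemma combine (hq : 1 < q) (s : ℤ) (ν : ℕ) (T : ℕ → ℚ) (E : ℕ → ℚ)
    (hE : ∀ l, l ≤ ν → E l * T (l + 1) = q ^ (s - ν + l) * T (l + 1)) :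
    ∑ l ∈ Finset.range (ν + 1),
        gaussQ q ν l * q ^ ((l : ℤ) * (s - ν + l)) * (E l * T (l + 1) + T l)
      = ∑ l ∈ Finset.range (ν + 1 + 1),
          gaussQ q (ν + 1) l * q ^ ((l : ℤ) * (s - (↑(ν + 1) : ℤ) + l)) * T l := by
  have hq0 : q ≠ 0 := ne_of_gt (lt_trans zero_lt_one hq)
  have hL : ∑ l ∈ Finset.range (ν + 1),
      gaussQ q ν l * q ^ ((l : ℤ) * (s - ν + l)) * (E l * T (l + 1) + T l)
      = (∑ l ∈ Finset.range (ν + 1),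
          gaussQ q ν l * q ^ ((l : ℤ) * (s - ν + l)) * (q ^ (s - ν + l) * T (l + 1)))
        + ∑ l ∈ Finset.range (ν + 1),
            gaussQ q ν l * q ^ ((l : ℤ) * (s - ν + l)) * T l := by
    rw [← Finset.sum_add_distrib]
    apply Finset.sum_congr rfl
    intro l hl
    rw [← hE l (by have := Finset.mem_range.mp hl; omega)]
    ring
  rw [hL]
  rw [Finset.sum_range_succ' (fun l => gaussQ q (ν + 1) l
      * q ^ ((l : ℤ) * (s - (↑(ν + 1) : ℤ) + l)) * T l) (ν + 1)]
  have h0 : gaussQ q (ν + 1) 0 * q ^ (((0 : ℕ) : ℤ) * (s - (↑(ν + 1) : ℤ) + ((0 : ℕ) : ℤ))) * T 0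
      = T 0 := by
    rw [gauss_zero]
    norm_num
  rw [h0]
  have hkey : ∀ j ∈ Finset.range (ν + 1),
      gaussQ q (ν + 1) (j + 1) * q ^ ((↑(j + 1) : ℤ) * (s - (↑(ν + 1) : ℤ) + ↑(j + 1))) * T (j + 1)
      = gaussQ q ν (j + 1) * q ^ ((↑(j + 1) : ℤ) * (s - ν + ↑(j + 1))) * T (j + 1)
        + gaussQ q ν j * q ^ ((j : ℤ) * (s - ν + j)) * (q ^ (s - ν + j) * T (j + 1)) := by
    intro j _
    rw [gauss_pascal hq]
    have e1 : q ^ ((↑(j + 1) : ℤ) * (s - ν + ↑(j + 1)))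
        = q ^ ((j : ℤ) + 1) * q ^ ((↑(j + 1) : ℤ) * (s - (↑(ν + 1) : ℤ) + ↑(j + 1))) := by
      rw [← zpow_add₀ hq0]; congr 1; push_cast; ring
    have e2 : q ^ ((j : ℤ) * (s - ν + j)) * q ^ (s - ν + j)
        = q ^ ((↑(j + 1) : ℤ) * (s - (↑(ν + 1) : ℤ) + ↑(j + 1))) := by
      rw [← zpow_add₀ hq0]; congr 1; push_cast; ring
    rw [e1]
    rw [show gaussQ q ν j * q ^ ((j : ℤ) * (s - ν + j)) * (q ^ (s - ν + j) * T (j + 1))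
        = gaussQ q ν j * (q ^ ((j : ℤ) * (s - ν + j)) * q ^ (s - ν + j)) * T (j + 1) by ring, e2]
    ring
  rw [Finset.sum_congr rfl hkey, Finset.sum_add_distrib]
  have hP : ∑ j ∈ Finset.range (ν + 1),
      gaussQ q ν (j + 1) * q ^ ((↑(j + 1) : ℤ) * (s - ν + ↑(j + 1))) * T (j + 1)
      = ∑ j ∈ Finset.range ν,
          gaussQ q ν (j + 1) * q ^ ((↑(j + 1) : ℤ) * (s - ν + ↑(j + 1))) * T (j + 1) := by
    rw [Finset.sum_range_succ, gauss_diag_succ]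
    ring
  have hQ : ∑ l ∈ Finset.range (ν + 1),
      gaussQ q ν l * q ^ ((l : ℤ) * (s - ν + l)) * T l
      = (∑ j ∈ Finset.range ν,
          gaussQ q ν (j + 1) * q ^ ((↑(j + 1) : ℤ) * (s - ν + ↑(j + 1))) * T (j + 1)) + T 0 := by
    rw [Finset.sum_range_succ' (fun l => gaussQ q ν l * q ^ ((l : ℤ) * (s - ν + l)) * T l) ν]
    congr 1
    rw [gauss_zero]
    norm_num
  rw [hP, hQ]
  ring

end LeibnizAux

open LeibnizAux in
/-- **Leibniz rule for the q⁻¹-derivative**: for homogeneous polynomials `f(x,y;m)` of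
degree `r` and `g(x,y;m)` of degree `s`,
`[f(x,y;m) * g(x,y;m)]^{ν} = ∑_{l=0}^ν [ν l]_q q^(l(s-ν+l)) f^{l}(x,y;m) * g^{ν-l}(x,y;m-l)`
(stated coefficientwise). -/
theorem leibniz_rule_qinv_derivative (q : ℕ) (hq : 2 ≤ q) (f g : QPoly)
    (hf : ∀ (m : ℤ) (i : ℕ), f.deg < i → f.coeff m i = 0)
    (hg : ∀ (m : ℤ) (i : ℕ), g.deg < i → g.coeff m i = 0)
    (ν : ℕ) (m : ℤ) (u : ℕ) :
    ((qInvDerivP (q : ℚ))^[ν] (qMul (q : ℚ) f g)).coeff m u =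
      ∑ l ∈ Finset.range (ν + 1),
        gaussQ (q : ℚ) ν l * (q : ℚ) ^ ((l : ℤ) * ((g.deg : ℤ) - ν + l)) *
          (qMul (q : ℚ) ((qInvDerivP (q : ℚ))^[l] f)
            (mShift ((qInvDerivP (q : ℚ))^[ν - l] g) (l : ℤ))).coeff m u := by
  have hq1 : (1 : ℚ) < (q : ℚ) := by exact_mod_cast Nat.lt_of_lt_of_le one_lt_two hq
  have hq0 : (q : ℚ) ≠ 0 := ne_of_gt (lt_trans zero_lt_one hq1)
  have hqne1 : (q : ℚ) ≠ 1 := hq1.ne'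
  induction ν generalizing m u with
  | zero =>
    rw [Finset.sum_range_one, gauss_zero]
    simp [qMul_coeff, mShift]
  | succ ν ih =>
    have hstep : ∀ l, l ≤ ν →
        cq (q : ℚ) (u + 1)
            * (qMul (q : ℚ) ((qInvDerivP (q : ℚ))^[l] f)
                (mShift ((qInvDerivP (q : ℚ))^[ν - l] g) (l : ℤ))).coeff m (u + 1)
          = (q : ℚ) ^ (g.deg - (ν - l))
              * (qMul (q : ℚ) ((qInvDerivP (q : ℚ))^[l + 1] f)
                  (mShift ((qInvDerivP (q : ℚ))^[ν + 1 - (l + 1)] g) ((l + 1 : ℕ) : ℤ))).coeff m u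
            + (qMul (q : ℚ) ((qInvDerivP (q : ℚ))^[l] f)
                (mShift ((qInvDerivP (q : ℚ))^[ν + 1 - l] g) (l : ℤ))).coeff m u := by
      intro l hl
      have hb : ∀ (m' : ℤ) (j : ℕ),
          (mShift ((qInvDerivP (q : ℚ))^[ν - l] g) (l : ℤ)).deg < j →
          (mShift ((qInvDerivP (q : ℚ))^[ν - l] g) (l : ℤ)).coeff m' j = 0 := by
        intro m' j hj
        have hdg : (mShift ((qInvDerivP (q : ℚ))^[ν - l] g) (l : ℤ)).deg = g.deg - (ν - l) :=
          iter_deg g (ν - l)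
        rw [hdg] at hj
        exact iter_vanish g hg (ν - l) (m' - l) j (by omega)
      have hs := step hq0 hqne1 ((qInvDerivP (q : ℚ))^[l] f)
        (mShift ((qInvDerivP (q : ℚ))^[ν - l] g) (l : ℤ)) hb m u
      rw [show (mShift ((qInvDerivP (q : ℚ))^[ν - l] g) (l : ℤ)).deg = g.deg - (ν - l) from
        iter_deg g (ν - l)] at hs
      rw [← Function.iterate_succ_apply' (qInvDerivP (q : ℚ)) l f] at hs
      rw [mShift_deriv] at hs
      rw [← Function.iterate_succ_apply' (qInvDerivP (q : ℚ)) (ν - l) g] at hs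
      rw [mShift_mShift] at hs
      simp only [Nat.succ_eq_add_one] at hs
      rw [show (ν - l) + 1 = ν + 1 - l by omega] at hs
      rw [show ((l : ℤ) + 1) = ((l + 1 : ℕ) : ℤ) by push_cast; ring] at hs
      rw [show ν + 1 - (l + 1) = ν - l by omega]
      exact hs
    have hE : ∀ l, l ≤ ν →
        (q : ℚ) ^ (g.deg - (ν - l))
            * (qMul (q : ℚ) ((qInvDerivP (q : ℚ))^[l + 1] f)
                (mShift ((qInvDerivP (q : ℚ))^[ν + 1 - (l + 1)] g) ((l + 1 : ℕ) : ℤ))).coeff m u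
          = (q : ℚ) ^ ((g.deg : ℤ) - ν + l)
            * (qMul (q : ℚ) ((qInvDerivP (q : ℚ))^[l + 1] f)
                (mShift ((qInvDerivP (q : ℚ))^[ν + 1 - (l + 1)] g) ((l + 1 : ℕ) : ℤ))).coeff m u := by
      intro l hl
      rcases le_or_gt (ν - l) g.deg with h1 | h2
      · congr 1
        rw [← zpow_natCast]
        congr 1
        omega
      · have hT : (qMul (q : ℚ) ((qInvDerivP (q : ℚ))^[l + 1] f)
            (mShift ((qInvDerivP (q : ℚ))^[ν + 1 - (l + 1)] g) ((l + 1 : ℕ) : ℤ))).coeff m u = 0 := by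
          rw [qMul_coeff]
          apply Finset.sum_eq_zero
          intro i _
          have hz : ((qInvDerivP (q : ℚ))^[ν + 1 - (l + 1)] g).coeff
              (m - i - ((l + 1 : ℕ) : ℤ)) (u - i) = 0 := by
            rw [show ν + 1 - (l + 1) = ν - l by omega]
            exact iter_vanish g hg (ν - l) _ _ (by omega)
          have hz' : (mShift ((qInvDerivP (q : ℚ))^[ν + 1 - (l + 1)] g) ((l + 1 : ℕ) : ℤ)).coeff
              (m - i) (u - i) = 0 := hz
          rw [hz']; ring
        rw [hT]; ring
    rw [Function.iterate_succ_apply', deriv_coeff, ih m (u + 1), Finset.mul_sum]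
    have hterm : ∀ l ∈ Finset.range (ν + 1),
        cq (q : ℚ) (u + 1) * (gaussQ (q : ℚ) ν l * (q : ℚ) ^ ((l : ℤ) * ((g.deg : ℤ) - ν + l))
            * (qMul (q : ℚ) ((qInvDerivP (q : ℚ))^[l] f)
                (mShift ((qInvDerivP (q : ℚ))^[ν - l] g) (l : ℤ))).coeff m (u + 1))
        = gaussQ (q : ℚ) ν l * (q : ℚ) ^ ((l : ℤ) * ((g.deg : ℤ) - ν + l))
            * ((q : ℚ) ^ (g.deg - (ν - l))
                * (qMul (q : ℚ) ((qInvDerivP (q : ℚ))^[l + 1] f)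
                    (mShift ((qInvDerivP (q : ℚ))^[ν + 1 - (l + 1)] g) ((l + 1 : ℕ) : ℤ))).coeff m u
              + (qMul (q : ℚ) ((qInvDerivP (q : ℚ))^[l] f)
                  (mShift ((qInvDerivP (q : ℚ))^[ν + 1 - l] g) (l : ℤ))).coeff m u) := by
      intro l hl
      have hlν : l ≤ ν := by have := Finset.mem_range.mp hl; omega
      calc cq (q : ℚ) (u + 1) * (gaussQ (q : ℚ) ν l * (q : ℚ) ^ ((l : ℤ) * ((g.deg : ℤ) - ν + l))
            * (qMul (q : ℚ) ((qInvDerivP (q : ℚ))^[l] f)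
                (mShift ((qInvDerivP (q : ℚ))^[ν - l] g) (l : ℤ))).coeff m (u + 1))
          = gaussQ (q : ℚ) ν l * (q : ℚ) ^ ((l : ℤ) * ((g.deg : ℤ) - ν + l))
            * (cq (q : ℚ) (u + 1) * (qMul (q : ℚ) ((qInvDerivP (q : ℚ))^[l] f)
                (mShift ((qInvDerivP (q : ℚ))^[ν - l] g) (l : ℤ))).coeff m (u + 1)) := by ring
        _ = _ := by rw [hstep l hlν]
    rw [Finset.sum_congr rfl hterm]
    exact combine hq1 (g.deg : ℤ) ν
      (fun j => (qMul (q : ℚ) ((qInvDerivP (q : ℚ))^[j] f)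
        (mShift ((qInvDerivP (q : ℚ))^[ν + 1 - j] g) (j : ℤ))).coeff m u)
      (fun l => (q : ℚ) ^ (g.deg - (ν - l))) hE
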